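/- Let m, k ∈ ℕ, 1 ≤ p₁, p₂ ≤ ∞, 1 ≤ θ₁, θ₂ ≤ ∞, ν₁, ν₂ > 0, λ ∈ [0,1], and define p, θ by 1/p = (1−λ)/p₁ + λ/p₂ and 1/θ = (1−λ)/θ₁ + λ/θ₂. Let r̃ ∈ [1, m] and l̃ ∈ [1, k] be real numbers satisfying ν₁/ν₂ = r̃^{1/p₁−1/p₂} · l̃^{1/θ₁−1/θ₂}, and let r = ⌊r̃⌋ or r = ⌈r̃⌉ and l = ⌊l̃⌋ or l = ⌈l̃⌉. Then ν₁^{1−λ} ν₂^{λ} r^{−1/p} l^{−1/θ} V_{r,l}^{m,k} ⊆ 4 (ν₁ B_{p₁,θ₁}^{m,k} ∩ ν₂ B_{p₂,θ₂}^{m,k}). -/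

import Mathlib

open scoped ENNReal BigOperators Pointwise

noncomputable section

/-- The `ℓ_p` norm of a finite real vector, for `p ∈ [1,∞]`
(maximum when `p = ∞`). -/
def pVecNorm (p : ℝ≥0∞) {m : ℕ} (v : Fin m → ℝ) : ℝ :=
  if p = ∞ then ⨆ i, |v i|
  else (∑ i, |v i| ^ p.toReal) ^ (1 / p.toReal)

/-- The mixed `(p,θ)`-norm on `ℝ^{m×k}`: the inner index `i` ranges over `Fin m`,
the outer index `j` over `Fin k`. -/
def mixNorm (p θ : ℝ≥0∞) {m k : ℕ} (x : Fin m → Fin k → ℝ) : ℝ :=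
  if θ = ∞ then ⨆ j, pVecNorm p (fun i => x i j)
  else (∑ j, (pVecNorm p (fun i => x i j)) ^ θ.toReal) ^ (1 / θ.toReal)

/-- The closed unit ball `B_{p,θ}^{m,k}` of `l_{p,θ}^{m,k}`. -/
def mixBall (p θ : ℝ≥0∞) (m k : ℕ) : Set (Fin m → Fin k → ℝ) :=
  {x | mixNorm p θ x ≤ 1}

/-- The Kolmogorov `n`-width of a set `M ⊆ ℝ^{m×k}` in the space `l_{q,σ}^{m,k}`. -/
def kolWidth (q σ : ℝ≥0∞) {m k : ℕ} (n : ℕ) (M : Set (Fin m → Fin k → ℝ)) : ℝ :=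
  ⨅ L : {L : Submodule ℝ (Fin m → Fin k → ℝ) // Module.finrank ℝ L ≤ n},
    ⨆ x ∈ M, ⨅ y ∈ L.1, mixNorm q σ (x - y)

/-- The unit ball `B_{p,θ}^{m,k}` for finite real exponents `p, θ`. -/
def ballR (p θ : ℝ) (m k : ℕ) : Set (Fin m → Fin k → ℝ) :=
  mixBall (ENNReal.ofReal p) (ENNReal.ofReal θ) m k

/-- The Kolmogorov `n`-width in `l_{q,σ}^{m,k}` for finite real exponents `q, σ`. -/
def dW (q σ : ℝ) {m k : ℕ} (n : ℕ) (M : Set (Fin m → Fin k → ℝ)) : ℝ :=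
  kolWidth (ENNReal.ofReal q) (ENNReal.ofReal σ) n M

/-- The set `V_{r,l}^{m,k}`: the convex hull of all matrices obtained from the
`0/1` matrix `e^{m,k,r,l}` (with `1` exactly in the first `r` rows and first
`l` columns) by permuting rows and columns and changing signs of rows and columns. -/
def Vmk (m k r l : ℕ) : Set (Fin m → Fin k → ℝ) :=
  convexHull ℝ {x | ∃ (τ₁ : Equiv.Perm (Fin m)) (τ₂ : Equiv.Perm (Fin k))
    (ε₁ : Fin m → ℝ) (ε₂ : Fin k → ℝ),
    (∀ i, ε₁ i = 1 ∨ ε₁ i = -1) ∧ (∀ j, ε₂ j = 1 ∨ ε₂ j = -1) ∧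
    ∀ i j, x i j = ε₁ i * ε₂ j * (if (τ₁ i : ℕ) < r ∧ (τ₂ j : ℕ) < l then 1 else 0)}

namespace Stmt7Aux

lemma toReal_one_le {p : ℝ≥0∞} (hp : 1 ≤ p) (hptop : p ≠ ∞) : 1 ≤ p.toReal := by
  have := ENNReal.toReal_mono hptop hp
  simpa using this

lemma pVecNorm_nonneg (p : ℝ≥0∞) {m : ℕ} (v : Fin m → ℝ) : 0 ≤ pVecNorm p v := by
  unfold pVecNorm
  split
  · exact Real.iSup_nonneg fun i => abs_nonneg _
  · exact Real.rpow_nonneg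
      (Finset.sum_nonneg fun i _ => Real.rpow_nonneg (abs_nonneg _) _) _

lemma pVecNorm_mono (p : ℝ≥0∞) {m : ℕ} {v w : Fin m → ℝ}
    (h : ∀ i, |v i| ≤ |w i|) : pVecNorm p v ≤ pVecNorm p w := by
  unfold pVecNorm
  split
  · refine Real.iSup_le (fun i => le_trans (h i) ?_)
      (Real.iSup_nonneg fun i => abs_nonneg _)
    exact le_ciSup (f := fun i => |w i|) (Set.Finite.bddAbove (Set.finite_range _)) i
  · refine Real.rpow_le_rpow
      (Finset.sum_nonneg fun i _ => Real.rpow_nonneg (abs_nonneg _) _)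
      (Finset.sum_le_sum fun i _ => Real.rpow_le_rpow (abs_nonneg _) (h i)
        ENNReal.toReal_nonneg)
      (by positivity)

lemma pVecNorm_smul (p : ℝ≥0∞) (hp : 1 ≤ p) {m : ℕ} {c : ℝ} (hc : 0 ≤ c)
    (v : Fin m → ℝ) : pVecNorm p (fun i => c * v i) = c * pVecNorm p v := by
  by_cases hptop : p = ∞
  · rw [pVecNorm, pVecNorm, if_pos hptop, if_pos hptop]
    simp only [abs_mul, abs_of_nonneg hc]
    exact (Real.mul_iSup_of_nonneg hc _).symm
  · rw [pVecNorm, pVecNorm, if_neg hptop, if_neg hptop]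
    have hpr : 1 ≤ p.toReal := toReal_one_le hp hptop
    have hpr0 : p.toReal ≠ 0 := by linarith
    have h1 : ∀ i : Fin m, |c * v i| ^ p.toReal = c ^ p.toReal * |v i| ^ p.toReal := by
      intro i
      rw [abs_mul, abs_of_nonneg hc, Real.mul_rpow hc (abs_nonneg _)]
    simp only [h1, ← Finset.mul_sum]
    rw [Real.mul_rpow (by positivity)
      (Finset.sum_nonneg fun i _ => Real.rpow_nonneg (abs_nonneg _) _),
      ← Real.rpow_mul hc, mul_one_div_cancel hpr0, Real.rpow_one]

lemma pVecNorm_add_le (p : ℝ≥0∞) (hp : 1 ≤ p) {m : ℕ} (v w : Fin m → ℝ) :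
    pVecNorm p (fun i => v i + w i) ≤ pVecNorm p v + pVecNorm p w := by
  by_cases hptop : p = ∞
  · rw [pVecNorm, pVecNorm, pVecNorm, if_pos hptop, if_pos hptop, if_pos hptop]
    refine Real.iSup_le (fun i => ?_)
      (add_nonneg (Real.iSup_nonneg fun i => abs_nonneg _)
        (Real.iSup_nonneg fun i => abs_nonneg _))
    exact le_trans (abs_add_le _ _)
      (add_le_add
        (le_ciSup (f := fun i => |v i|) (Set.Finite.bddAbove (Set.finite_range _)) i)
        (le_ciSup (f := fun i => |w i|) (Set.Finite.bddAbove (Set.finite_range _)) i))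
  · rw [pVecNorm, pVecNorm, pVecNorm, if_neg hptop, if_neg hptop, if_neg hptop]
    exact Real.Lp_add_le Finset.univ v w (toReal_one_le hp hptop)

lemma pVecNorm_le (p : ℝ≥0∞) (hp : 1 ≤ p) {m : ℕ} (v : Fin m → ℝ) {C : ℝ}
    (hC : 0 ≤ C) (n : ℕ) (hv : ∀ i, |v i| ≤ C)
    (hcard : (Finset.univ.filter fun i => v i ≠ 0).card ≤ n) :
    pVecNorm p v ≤ (n : ℝ) ^ p⁻¹.toReal * C := by
  by_cases hptop : p = ∞
  · rw [pVecNorm, if_pos hptop, hptop]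
    simp only [ENNReal.inv_top, ENNReal.toReal_zero, Real.rpow_zero, one_mul]
    exact Real.iSup_le hv hC
  · rw [pVecNorm, if_neg hptop]
    have hpr : 1 ≤ p.toReal := toReal_one_le hp hptop
    have hpr0 : (0:ℝ) < p.toReal := by linarith
    have hsum : ∑ i, |v i| ^ p.toReal ≤ (n : ℝ) * C ^ p.toReal := by
      rw [← Finset.sum_filter_of_ne (p := fun i => v i ≠ 0)
        (fun i _ h => by
          intro hvi
          apply h
          rw [hvi, abs_zero, Real.zero_rpow hpr0.ne'])]
      calc ∑ i ∈ Finset.univ.filter fun i => v i ≠ 0, |v i| ^ p.toReal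
          ≤ ∑ _i ∈ Finset.univ.filter fun i => v i ≠ 0, C ^ p.toReal :=
            Finset.sum_le_sum fun i _ =>
              Real.rpow_le_rpow (abs_nonneg _) (hv i) hpr0.le
        _ = ((Finset.univ.filter fun i => v i ≠ 0).card : ℝ) * C ^ p.toReal := by
            rw [Finset.sum_const, nsmul_eq_mul]
        _ ≤ (n : ℝ) * C ^ p.toReal := by
            have : (0:ℝ) ≤ C ^ p.toReal := Real.rpow_nonneg hC _
            exact mul_le_mul_of_nonneg_right (by exact_mod_cast hcard) this
    have h0 : (0:ℝ) ≤ ∑ i, |v i| ^ p.toReal :=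
      Finset.sum_nonneg fun i _ => Real.rpow_nonneg (abs_nonneg _) _
    calc (∑ i, |v i| ^ p.toReal) ^ (1 / p.toReal)
        ≤ ((n : ℝ) * C ^ p.toReal) ^ (1 / p.toReal) :=
          Real.rpow_le_rpow h0 hsum (by positivity)
      _ = (n : ℝ) ^ p⁻¹.toReal * C := by
          rw [Real.mul_rpow (Nat.cast_nonneg n) (Real.rpow_nonneg hC _),
            ← Real.rpow_mul hC, mul_one_div_cancel hpr0.ne', Real.rpow_one,
            ENNReal.toReal_inv, one_div]

end Stmt7Aux


namespace Stmt7Aux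

lemma mixNorm_eq (p θ : ℝ≥0∞) {m k : ℕ} (x : Fin m → Fin k → ℝ) :
    mixNorm p θ x = pVecNorm θ (fun j => pVecNorm p (fun i => x i j)) := by
  have h : ∀ j, |pVecNorm p (fun i => x i j)| = pVecNorm p (fun i => x i j) :=
    fun j => abs_of_nonneg (pVecNorm_nonneg _ _)
  rw [mixNorm, pVecNorm]
  simp only [h]

lemma mixNorm_smul (p θ : ℝ≥0∞) (hp : 1 ≤ p) (hθ : 1 ≤ θ) {m k : ℕ} {c : ℝ}
    (hc : 0 ≤ c) (x : Fin m → Fin k → ℝ) :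
    mixNorm p θ (c • x) = c * mixNorm p θ x := by
  rw [mixNorm_eq, mixNorm_eq]
  have h1 : ∀ j, pVecNorm p (fun i => (c • x) i j)
      = c * pVecNorm p (fun i => x i j) := by
    intro j
    have : (fun i => (c • x) i j) = fun i => c * x i j := by
      funext i; simp [Pi.smul_apply]
    rw [this, pVecNorm_smul p hp hc]
  simp only [h1]
  exact pVecNorm_smul θ hθ hc _

lemma mixNorm_add_le (p θ : ℝ≥0∞) (hp : 1 ≤ p) (hθ : 1 ≤ θ) {m k : ℕ}
    (x y : Fin m → Fin k → ℝ) :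
    mixNorm p θ (x + y) ≤ mixNorm p θ x + mixNorm p θ y := by
  rw [mixNorm_eq, mixNorm_eq, mixNorm_eq]
  calc pVecNorm θ (fun j => pVecNorm p (fun i => (x + y) i j))
      ≤ pVecNorm θ (fun j => pVecNorm p (fun i => x i j)
          + pVecNorm p (fun i => y i j)) := by
        apply pVecNorm_mono
        intro j
        rw [abs_of_nonneg (pVecNorm_nonneg _ _),
          abs_of_nonneg (add_nonneg (pVecNorm_nonneg _ _) (pVecNorm_nonneg _ _))]
        have : (fun i => (x + y) i j) = fun i => x i j + y i j := by
          funext i; simp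
        rw [this]
        exact pVecNorm_add_le p hp _ _
    _ ≤ _ := pVecNorm_add_le θ hθ _ _

lemma convex_mixNorm_le (p θ : ℝ≥0∞) (hp : 1 ≤ p) (hθ : 1 ≤ θ) {m k : ℕ} (C : ℝ) :
    Convex ℝ {x : Fin m → Fin k → ℝ | mixNorm p θ x ≤ C} := by
  intro x hx y hy a b ha hb hab
  simp only [Set.mem_setOf_eq] at hx hy ⊢
  calc mixNorm p θ (a • x + b • y)
      ≤ mixNorm p θ (a • x) + mixNorm p θ (b • y) := mixNorm_add_le p θ hp hθ _ _
    _ = a * mixNorm p θ x + b * mixNorm p θ y := by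
        rw [mixNorm_smul p θ hp hθ ha, mixNorm_smul p θ hp hθ hb]
    _ ≤ a * C + b * C := add_le_add
        (mul_le_mul_of_nonneg_left hx ha) (mul_le_mul_of_nonneg_left hy hb)
    _ = C := by rw [← add_mul, hab, one_mul]

lemma card_filter_perm_lt {m : ℕ} (r : ℕ) (τ : Equiv.Perm (Fin m)) :
    (Finset.univ.filter fun i : Fin m => (τ i : ℕ) < r).card ≤ r := by
  calc (Finset.univ.filter fun i : Fin m => (τ i : ℕ) < r).card
      ≤ (Finset.range r).card := by
        apply Finset.card_le_card_of_injOn (fun i => (τ i : ℕ))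
        · intro i hi
          simp only [Finset.mem_coe, Finset.mem_filter] at hi
          exact Finset.mem_range.mpr hi.2
        · intro a _ b _ hab
          exact τ.injective (Fin.val_injective hab)
    _ = r := Finset.card_range r

lemma gen_norm_le (p θ : ℝ≥0∞) (hp : 1 ≤ p) (hθ : 1 ≤ θ) {m k r l : ℕ}
    (τ₁ : Equiv.Perm (Fin m)) (τ₂ : Equiv.Perm (Fin k))
    (ε₁ : Fin m → ℝ) (ε₂ : Fin k → ℝ)
    (hε₁ : ∀ i, ε₁ i = 1 ∨ ε₁ i = -1) (hε₂ : ∀ j, ε₂ j = 1 ∨ ε₂ j = -1)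
    (x : Fin m → Fin k → ℝ)
    (hx : ∀ i j, x i j = ε₁ i * ε₂ j *
      (if (τ₁ i : ℕ) < r ∧ (τ₂ j : ℕ) < l then 1 else 0)) :
    mixNorm p θ x ≤ (r : ℝ) ^ p⁻¹.toReal * (l : ℝ) ^ θ⁻¹.toReal := by
  have habs : ∀ i j, |x i j|
      = if (τ₁ i : ℕ) < r ∧ (τ₂ j : ℕ) < l then 1 else 0 := by
    intro i j
    have h1 : |ε₁ i| = 1 := by rcases hε₁ i with h | h <;> simp [h]
    have h2 : |ε₂ j| = 1 := by rcases hε₂ j with h | h <;> simp [h]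
    rw [hx, abs_mul, abs_mul, h1, h2, one_mul, one_mul]
    split <;> simp
  have inner_le : ∀ j, pVecNorm p (fun i => x i j) ≤ (r : ℝ) ^ p⁻¹.toReal := by
    intro j
    have := pVecNorm_le p hp (fun i => x i j) (C := 1) zero_le_one r
      (fun i => by show |x i j| ≤ 1; rw [habs i j]; split <;> norm_num)
      (by
        refine le_trans (Finset.card_le_card ?_) (card_filter_perm_lt r τ₁)
        intro i hi
        simp only [Finset.mem_filter, Finset.mem_univ, true_and] at hi ⊢
        by_contra hlt
        apply hi
        have := habs i j
        rw [if_neg (fun hc => hlt hc.1)] at this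
        exact abs_eq_zero.mp this)
    simpa using this
  have inner_zero : ∀ j, ¬((τ₂ j : ℕ) < l) → pVecNorm p (fun i => x i j) = 0 := by
    intro j hj
    have hz : ∀ i, x i j = 0 := by
      intro i
      have := habs i j
      rw [if_neg (fun hc => hj hc.2)] at this
      exact abs_eq_zero.mp this
    refine le_antisymm ?_ (pVecNorm_nonneg _ _)
    have := pVecNorm_le p hp (fun i => x i j) (C := 0) le_rfl 0
      (fun i => by show |x i j| ≤ 0; rw [hz i]; simp)
      (by
        have : (Finset.univ.filter fun i : Fin m => x i j ≠ 0) = ∅ := by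
          apply Finset.filter_false_of_mem
          intro i _
          simp [hz i]
        simp [this])
    simpa using this
  rw [mixNorm_eq]
  have := pVecNorm_le θ hθ (fun j => pVecNorm p (fun i => x i j))
    (C := (r : ℝ) ^ p⁻¹.toReal)
    (Real.rpow_nonneg (Nat.cast_nonneg r) _) l
    (fun j => by
      rw [abs_of_nonneg (pVecNorm_nonneg _ _)]
      exact inner_le j)
    (by
      refine le_trans (Finset.card_le_card ?_) (card_filter_perm_lt l τ₂)
      intro j hj
      simp only [Finset.mem_filter, Finset.mem_univ, true_and] at hj ⊢
      by_contra hlt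
      exact hj (inner_zero j hlt))
  calc pVecNorm θ (fun j => pVecNorm p fun i => x i j)
      ≤ (l : ℝ) ^ θ⁻¹.toReal * (r : ℝ) ^ p⁻¹.toReal := this
    _ = _ := mul_comm _ _

lemma rpow_le_two {x s : ℝ} (hx1 : 1 / 2 ≤ x) (hx2 : x ≤ 2) (hs : |s| ≤ 1) :
    x ^ s ≤ 2 := by
  have hx0 : (0:ℝ) < x := lt_of_lt_of_le (by norm_num) hx1
  rcases le_total 1 x with h | h
  · calc x ^ s ≤ x ^ (1:ℝ) :=
        Real.rpow_le_rpow_of_exponent_le h (le_trans (le_abs_self s) hs)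
      _ = x := Real.rpow_one x
      _ ≤ 2 := hx2
  · have h1 : x ^ s ≤ x ^ (-(1:ℝ)) := by
      apply Real.rpow_le_rpow_of_exponent_ge hx0 h
      have := neg_abs_le s
      linarith [neg_le_neg hs]
    calc x ^ s ≤ x ^ (-(1:ℝ)) := h1
      _ = x⁻¹ := by rw [Real.rpow_neg_one]
      _ ≤ 2 := by
          rw [inv_le_comm₀ hx0 (by norm_num)]
          linarith
    
lemma combine {ν₁ ν₂ rt lt : ℝ} (hν₁ : 0 < ν₁) (hν₂ : 0 < ν₂)
    (hrt : 0 < rt) (hlt : 0 < lt) {A B u : ℝ}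
    (hν : ν₁ / ν₂ = rt ^ A * lt ^ B) (t : ℝ) :
    ν₁ ^ (1 - t) * ν₂ ^ t * rt ^ (u * A) * lt ^ (u * B)
      = ν₁ ^ (1 - t + u) * ν₂ ^ (t - u) := by
  have h1 : rt ^ (u * A) * lt ^ (u * B) = (ν₁ / ν₂) ^ u := by
    rw [hν, Real.mul_rpow (Real.rpow_nonneg hrt.le _) (Real.rpow_nonneg hlt.le _),
      mul_comm u A, mul_comm u B, Real.rpow_mul hrt.le, Real.rpow_mul hlt.le]
  calc ν₁ ^ (1 - t) * ν₂ ^ t * rt ^ (u * A) * lt ^ (u * B)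
      = ν₁ ^ (1 - t) * ν₂ ^ t * ((ν₁ / ν₂) ^ u) := by rw [mul_assoc, h1]
    _ = ν₁ ^ (1 - t + u) * ν₂ ^ (t - u) := by
        rw [Real.div_rpow hν₁.le hν₂.le, Real.rpow_add hν₁, Real.rpow_sub hν₂]
        field_simp

lemma key_ineq {ν₁ ν₂ rt lt R L A B t u : ℝ} (hν₁ : 0 < ν₁) (hν₂ : 0 < ν₂)
    (hrt : 0 < rt) (hlt : 0 < lt) (hR : 0 < R) (hL : 0 < L)
    (hR1 : 1 / 2 ≤ R / rt) (hR2 : R / rt ≤ 2)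
    (hL1 : 1 / 2 ≤ L / lt) (hL2 : L / lt ≤ 2)
    (hA : |u * A| ≤ 1) (hB : |u * B| ≤ 1)
    (hν : ν₁ / ν₂ = rt ^ A * lt ^ B) :
    ν₁ ^ (1 - t) * ν₂ ^ t * R ^ (u * A) * L ^ (u * B)
      ≤ 4 * (ν₁ ^ (1 - t + u) * ν₂ ^ (t - u)) := by
  have hRr : (0:ℝ) < R / rt := by positivity
  have hLl : (0:ℝ) < L / lt := by positivity
  have hRsplit : R ^ (u * A) = rt ^ (u * A) * (R / rt) ^ (u * A) := by
    rw [← Real.mul_rpow hrt.le hRr.le]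
    congr 1
    field_simp
  have hLsplit : L ^ (u * B) = lt ^ (u * B) * (L / lt) ^ (u * B) := by
    rw [← Real.mul_rpow hlt.le hLl.le]
    congr 1
    field_simp
  have hcomb := combine hν₁ hν₂ hrt hlt (u := u) hν t
  have hXpos : (0:ℝ) < ν₁ ^ (1 - t + u) * ν₂ ^ (t - u) := by positivity
  calc ν₁ ^ (1 - t) * ν₂ ^ t * R ^ (u * A) * L ^ (u * B)
      = (ν₁ ^ (1 - t) * ν₂ ^ t * rt ^ (u * A) * lt ^ (u * B))
          * ((R / rt) ^ (u * A) * (L / lt) ^ (u * B)) := by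
        rw [hRsplit, hLsplit]; ring
    _ = (ν₁ ^ (1 - t + u) * ν₂ ^ (t - u))
          * ((R / rt) ^ (u * A) * (L / lt) ^ (u * B)) := by rw [hcomb]
    _ ≤ (ν₁ ^ (1 - t + u) * ν₂ ^ (t - u)) * (2 * 2) := by
        refine mul_le_mul_of_nonneg_left ?_ hXpos.le
        exact mul_le_mul (rpow_le_two hR1 hR2 hA) (rpow_le_two hL1 hL2 hB)
          (Real.rpow_nonneg hLl.le _) (by norm_num)
    _ = 4 * (ν₁ ^ (1 - t + u) * ν₂ ^ (t - u)) := by ring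

end Stmt7Aux


namespace Stmt7Aux

lemma round_facts (s : ℝ) (n : ℕ) (hs : 1 ≤ s)
    (hn : (n : ℤ) = ⌊s⌋ ∨ (n : ℤ) = ⌈s⌉) :
    (1 : ℝ) ≤ (n : ℝ) ∧ (n : ℝ) ≤ 2 * s ∧ s ≤ 2 * (n : ℝ) := by
  have hfl : (1 : ℤ) ≤ ⌊s⌋ := Int.le_floor.mpr (by exact_mod_cast hs)
  have hflr : (1 : ℝ) ≤ (⌊s⌋ : ℝ) := by exact_mod_cast hfl
  have hclr : (1 : ℝ) ≤ (⌈s⌉ : ℝ) := by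
    exact_mod_cast le_trans hfl (Int.floor_le_ceil s)
  have hfls : ((⌊s⌋ : ℤ) : ℝ) ≤ s := Int.floor_le s
  have hcls : ((⌈s⌉ : ℤ) : ℝ) < s + 1 := Int.ceil_lt_add_one s
  have hsfl : s < (⌊s⌋ : ℝ) + 1 := Int.lt_floor_add_one s
  have hscl : s ≤ (⌈s⌉ : ℝ) := Int.le_ceil s
  rcases hn with h | h
  · have hnr : (n : ℝ) = ((⌊s⌋ : ℤ) : ℝ) := by exact_mod_cast h
    refine ⟨by linarith, by linarith, by linarith⟩
  · have hnr : (n : ℝ) = ((⌈s⌉ : ℤ) : ℝ) := by exact_mod_cast h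
    refine ⟨by linarith, by linarith, by linarith⟩

lemma inv_facts (q : ℝ≥0∞) (hq : 1 ≤ q) : q⁻¹ ≠ ∞ ∧ q⁻¹.toReal ≤ 1 := by
  have h0 : q ≠ 0 := (zero_lt_one.trans_le hq).ne'
  have hle : q⁻¹ ≤ 1 := ENNReal.inv_le_one.mpr hq
  exact ⟨ENNReal.inv_ne_top.mpr h0,
    by simpa using ENNReal.toReal_mono ENNReal.one_ne_top hle⟩

end Stmt7Aux


open Stmt7Aux in
/-- Lemma 2: if `ν₁/ν₂ = r̃^{1/p₁−1/p₂}·l̃^{1/θ₁−1/θ₂}` with `r̃ ∈ [1,m]`,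
`l̃ ∈ [1,k]`, and `r, l` are obtained from `r̃, l̃` by rounding up or down, then
`ν₁^{1−λ}ν₂^{λ} r^{−1/p} l^{−1/θ} V_{r,l}^{m,k} ⊆ 4(ν₁B_{p₁,θ₁}^{m,k} ∩ ν₂B_{p₂,θ₂}^{m,k})`,
where `1/p = (1−λ)/p₁ + λ/p₂`, `1/θ = (1−λ)/θ₁ + λ/θ₂`. -/
theorem stmt_7 (m k : ℕ) (p₁ p₂ θ₁ θ₂ p θ : ℝ≥0∞)
    (hp₁ : 1 ≤ p₁) (hp₂ : 1 ≤ p₂) (hθ₁ : 1 ≤ θ₁) (hθ₂ : 1 ≤ θ₂)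
    (ν₁ ν₂ : ℝ) (hν₁ : 0 < ν₁) (hν₂ : 0 < ν₂)
    (t : ℝ) (ht : t ∈ Set.Icc (0:ℝ) 1)
    (hp : p⁻¹ = ENNReal.ofReal (1 - t) * p₁⁻¹ + ENNReal.ofReal t * p₂⁻¹)
    (hθ : θ⁻¹ = ENNReal.ofReal (1 - t) * θ₁⁻¹ + ENNReal.ofReal t * θ₂⁻¹)
    (rt lt : ℝ) (hrt : rt ∈ Set.Icc (1:ℝ) (m : ℝ)) (hlt : lt ∈ Set.Icc (1:ℝ) (k : ℝ))
    (hν : ν₁ / ν₂ = rt ^ (p₁⁻¹.toReal - p₂⁻¹.toReal) * lt ^ (θ₁⁻¹.toReal - θ₂⁻¹.toReal))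
    (r l : ℕ) (hr : (r : ℤ) = ⌊rt⌋ ∨ (r : ℤ) = ⌈rt⌉) (hl : (l : ℤ) = ⌊lt⌋ ∨ (l : ℤ) = ⌈lt⌉) :
    (ν₁ ^ (1 - t) * ν₂ ^ t * (r : ℝ) ^ (-(p⁻¹.toReal)) * (l : ℝ) ^ (-(θ⁻¹.toReal)))
        • Vmk m k r l ⊆
      (4 : ℝ) • ((ν₁ • mixBall p₁ θ₁ m k) ∩ (ν₂ • mixBall p₂ θ₂ m k)) := by
  obtain ⟨h0t, ht1⟩ := ht
  obtain ⟨hrt1, _⟩ := hrt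
  obtain ⟨hlt1, _⟩ := hlt
  have hrt0 : (0:ℝ) < rt := by linarith
  have hlt0 : (0:ℝ) < lt := by linarith
  set a₁ := p₁⁻¹.toReal with ha₁def
  set a₂ := p₂⁻¹.toReal with ha₂def
  set b₁ := θ₁⁻¹.toReal with hb₁def
  set b₂ := θ₂⁻¹.toReal with hb₂def
  obtain ⟨hfin₁, ha₁⟩ := inv_facts p₁ hp₁
  obtain ⟨hfin₂, ha₂⟩ := inv_facts p₂ hp₂
  obtain ⟨hfinθ₁, hb₁⟩ := inv_facts θ₁ hθ₁
  obtain ⟨hfinθ₂, hb₂⟩ := inv_facts θ₂ hθ₂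
  have ha₁0 : 0 ≤ a₁ := ENNReal.toReal_nonneg
  have ha₂0 : 0 ≤ a₂ := ENNReal.toReal_nonneg
  have hb₁0 : 0 ≤ b₁ := ENNReal.toReal_nonneg
  have hb₂0 : 0 ≤ b₂ := ENNReal.toReal_nonneg
  have hap : p⁻¹.toReal = (1 - t) * a₁ + t * a₂ := by
    rw [hp, ENNReal.toReal_add (ENNReal.mul_ne_top ENNReal.ofReal_ne_top hfin₁)
        (ENNReal.mul_ne_top ENNReal.ofReal_ne_top hfin₂),
      ENNReal.toReal_mul, ENNReal.toReal_mul,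
      ENNReal.toReal_ofReal (by linarith), ENNReal.toReal_ofReal h0t]
  have hbt : θ⁻¹.toReal = (1 - t) * b₁ + t * b₂ := by
    rw [hθ, ENNReal.toReal_add (ENNReal.mul_ne_top ENNReal.ofReal_ne_top hfinθ₁)
        (ENNReal.mul_ne_top ENNReal.ofReal_ne_top hfinθ₂),
      ENNReal.toReal_mul, ENNReal.toReal_mul,
      ENNReal.toReal_ofReal (by linarith), ENNReal.toReal_ofReal h0t]
  obtain ⟨hr1, hrle, hrge⟩ := round_facts rt r hrt1 hr
  obtain ⟨hl1, hlle, hlge⟩ := round_facts lt l hlt1 hl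
  have hr0 : (0:ℝ) < (r : ℝ) := by linarith
  have hl0 : (0:ℝ) < (l : ℝ) := by linarith
  have hRr1 : (1:ℝ)/2 ≤ (r:ℝ)/rt := by rw [le_div_iff₀ hrt0]; linarith
  have hRr2 : (r:ℝ)/rt ≤ 2 := by rw [div_le_iff₀ hrt0]; linarith
  have hLl1 : (1:ℝ)/2 ≤ (l:ℝ)/lt := by rw [le_div_iff₀ hlt0]; linarith
  have hLl2 : (l:ℝ)/lt ≤ 2 := by rw [div_le_iff₀ hlt0]; linarith
  intro w hw
  obtain ⟨x, hx, rfl⟩ := hw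
  set c : ℝ := ν₁ ^ (1 - t) * ν₂ ^ t * (r : ℝ) ^ (-(p⁻¹.toReal)) * (l : ℝ) ^ (-(θ⁻¹.toReal))
    with hc
  have hcpos : 0 < c := by
    rw [hc]
    have h1 : (0:ℝ) < ν₁ ^ (1 - t) := Real.rpow_pos_of_pos hν₁ _
    have h2 : (0:ℝ) < ν₂ ^ t := Real.rpow_pos_of_pos hν₂ _
    have h3 : (0:ℝ) < (r:ℝ) ^ (-(p⁻¹.toReal)) := Real.rpow_pos_of_pos hr0 _
    have h4 : (0:ℝ) < (l:ℝ) ^ (-(θ⁻¹.toReal)) := Real.rpow_pos_of_pos hl0 _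
    positivity
  have hx₁ : mixNorm p₁ θ₁ x ≤ (r:ℝ) ^ a₁ * (l:ℝ) ^ b₁ := by
    refine convexHull_min ?_ (convex_mixNorm_le p₁ θ₁ hp₁ hθ₁ _) hx
    rintro z ⟨τ₁, τ₂, ε₁, ε₂, h1, h2, h3⟩
    exact gen_norm_le p₁ θ₁ hp₁ hθ₁ τ₁ τ₂ ε₁ ε₂ h1 h2 z h3
  have hx₂ : mixNorm p₂ θ₂ x ≤ (r:ℝ) ^ a₂ * (l:ℝ) ^ b₂ := by
    refine convexHull_min ?_ (convex_mixNorm_le p₂ θ₂ hp₂ hθ₂ _) hx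
    rintro z ⟨τ₁, τ₂, ε₁, ε₂, h1, h2, h3⟩
    exact gen_norm_le p₂ θ₂ hp₂ hθ₂ τ₁ τ₂ ε₁ ε₂ h1 h2 z h3
  have hAabs : |a₁ - a₂| ≤ 1 := abs_le.mpr ⟨by linarith, by linarith⟩
  have hBabs : |b₁ - b₂| ≤ 1 := abs_le.mpr ⟨by linarith, by linarith⟩
  have htabs : |t| ≤ 1 := abs_le.mpr ⟨by linarith, by linarith⟩
  have huabs : |(-(1-t))| ≤ 1 := abs_le.mpr ⟨by linarith, by linarith⟩
  -- key inequality 1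
  have key1 : c * ((r:ℝ) ^ a₁ * (l:ℝ) ^ b₁) ≤ 4 * ν₁ := by
    have er : (r:ℝ) ^ (-(p⁻¹.toReal)) * (r:ℝ) ^ a₁ = (r:ℝ) ^ (t * (a₁ - a₂)) := by
      rw [← Real.rpow_add hr0]
      congr 1
      rw [hap]; ring
    have el : (l:ℝ) ^ (-(θ⁻¹.toReal)) * (l:ℝ) ^ b₁ = (l:ℝ) ^ (t * (b₁ - b₂)) := by
      rw [← Real.rpow_add hl0]
      congr 1
      rw [hbt]; ring
    have e1 : c * ((r:ℝ) ^ a₁ * (l:ℝ) ^ b₁)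
        = ν₁ ^ (1 - t) * ν₂ ^ t * (r:ℝ) ^ (t * (a₁ - a₂)) * (l:ℝ) ^ (t * (b₁ - b₂)) := by
      rw [← er, ← el, hc]; ring
    rw [e1]
    have hA' : |t * (a₁ - a₂)| ≤ 1 := by
      rw [abs_mul]
      exact mul_le_one₀ htabs (abs_nonneg _) hAabs
    have hB' : |t * (b₁ - b₂)| ≤ 1 := by
      rw [abs_mul]
      exact mul_le_one₀ htabs (abs_nonneg _) hBabs
    have := key_ineq (t := t) (u := t) hν₁ hν₂ hrt0 hlt0 hr0 hl0
      hRr1 hRr2 hLl1 hLl2 hA' hB' hν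
    calc ν₁ ^ (1 - t) * ν₂ ^ t * (r:ℝ) ^ (t * (a₁ - a₂)) * (l:ℝ) ^ (t * (b₁ - b₂))
        ≤ 4 * (ν₁ ^ (1 - t + t) * ν₂ ^ (t - t)) := this
      _ = 4 * ν₁ := by
          rw [show (1:ℝ) - t + t = 1 by ring, show t - t = (0:ℝ) by ring,
            Real.rpow_one, Real.rpow_zero, mul_one]
  have key2 : c * ((r:ℝ) ^ a₂ * (l:ℝ) ^ b₂) ≤ 4 * ν₂ := by
    have er : (r:ℝ) ^ (-(p⁻¹.toReal)) * (r:ℝ) ^ a₂ = (r:ℝ) ^ ((-(1-t)) * (a₁ - a₂)) := by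
      rw [← Real.rpow_add hr0]
      congr 1
      rw [hap]; ring
    have el : (l:ℝ) ^ (-(θ⁻¹.toReal)) * (l:ℝ) ^ b₂ = (l:ℝ) ^ ((-(1-t)) * (b₁ - b₂)) := by
      rw [← Real.rpow_add hl0]
      congr 1
      rw [hbt]; ring
    have e1 : c * ((r:ℝ) ^ a₂ * (l:ℝ) ^ b₂)
        = ν₁ ^ (1 - t) * ν₂ ^ t * (r:ℝ) ^ ((-(1-t)) * (a₁ - a₂))
          * (l:ℝ) ^ ((-(1-t)) * (b₁ - b₂)) := by
      rw [← er, ← el, hc]; ring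
    rw [e1]
    have hA' : |(-(1-t)) * (a₁ - a₂)| ≤ 1 := by
      rw [abs_mul]
      exact mul_le_one₀ huabs (abs_nonneg _) hAabs
    have hB' : |(-(1-t)) * (b₁ - b₂)| ≤ 1 := by
      rw [abs_mul]
      exact mul_le_one₀ huabs (abs_nonneg _) hBabs
    have := key_ineq (t := t) (u := -(1-t)) hν₁ hν₂ hrt0 hlt0 hr0 hl0
      hRr1 hRr2 hLl1 hLl2 hA' hB' hν
    calc ν₁ ^ (1 - t) * ν₂ ^ t * (r:ℝ) ^ ((-(1-t)) * (a₁ - a₂))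
          * (l:ℝ) ^ ((-(1-t)) * (b₁ - b₂))
        ≤ 4 * (ν₁ ^ (1 - t + -(1-t)) * ν₂ ^ (t - -(1-t))) := this
      _ = 4 * ν₂ := by
          rw [show (1:ℝ) - t + -(1-t) = 0 by ring, show t - -(1-t) = (1:ℝ) by ring,
            Real.rpow_one, Real.rpow_zero, one_mul]
  refine Set.mem_smul_set.mpr ⟨(c/4) • x, ⟨?_, ?_⟩, ?_⟩
  · refine Set.mem_smul_set.mpr ⟨(c/(4*ν₁)) • x, ?_, ?_⟩
    · show mixNorm p₁ θ₁ ((c/(4*ν₁)) • x) ≤ 1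
      rw [mixNorm_smul p₁ θ₁ hp₁ hθ₁ (by positivity) x, div_mul_eq_mul_div,
        div_le_one (by positivity)]
      calc c * mixNorm p₁ θ₁ x ≤ c * ((r:ℝ) ^ a₁ * (l:ℝ) ^ b₁) :=
          mul_le_mul_of_nonneg_left hx₁ hcpos.le
        _ ≤ 4 * ν₁ := key1
    · rw [smul_smul]
      congr 1
      field_simp
  · refine Set.mem_smul_set.mpr ⟨(c/(4*ν₂)) • x, ?_, ?_⟩
    · show mixNorm p₂ θ₂ ((c/(4*ν₂)) • x) ≤ 1
      rw [mixNorm_smul p₂ θ₂ hp₂ hθ₂ (by positivity) x, div_mul_eq_mul_div,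
        div_le_one (by positivity)]
      calc c * mixNorm p₂ θ₂ x ≤ c * ((r:ℝ) ^ a₂ * (l:ℝ) ^ b₂) :=
          mul_le_mul_of_nonneg_left hx₂ hcpos.le
        _ ≤ 4 * ν₂ := key2
    · rw [smul_smul]
      congr 1
      field_simp
  · rw [smul_smul]
    congr 1
    ring
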